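/- (Local-global bridge) Let B ⊆ X be a T-bounded Borel set and μ a T-w-invariant Borel measure with f μ-integrable. Then ∫_X f dμ = ∫_B S_f^{n_B(x)}(x) dμ(x), where n_B(x) = min{n ≥ 1 : T^n x ∈ B} is the hitting time of B and S_f^m(x) = Σ_{k<m} f(T^k x) w^T(x,k). -/

import Mathlib

open Finset MeasureTheory

noncomputable def cocycle {X : Type*} (T : X → X) (w : X → ℝ) (x : X) (k : ℕ) : ℝ :=
  ∏ j ∈ Finset.range k, w (T^[j] x)

noncomputable def wSum {X : Type*} (T : X → X) (w : X → ℝ) (h : X → ℝ) (n : ℕ) (x : X) : ℝ :=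
  ∑ k ∈ Finset.range n, h (T^[k] x) * cocycle T w x k

/-- Hitting time of `B`: least `n ≥ 1` with `T^[n] x ∈ B`. -/
noncomputable def hitTime {X : Type*} (T : X → X) (B : Set X) (x : X) : ℕ :=
  sInf {n : ℕ | 0 < n ∧ T^[n] x ∈ B}

def IsTWInvariant {X : Type*} [MeasurableSpace X] (T : X → X) (w : X → ℝ)
    (μ : Measure X) : Prop :=
  ∀ B : Set X, MeasurableSet B →
    μ B = ∫⁻ x in T ⁻¹' B, ENNReal.ofReal (w x) ∂μ

namespace LGBAux

set_option linter.unusedSectionVars false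

variable {X : Type*} [MeasurableSpace X]

/-- ENNReal-valued cocycle. -/
noncomputable def eC (T : X → X) (w : X → ℝ) (x : X) (k : ℕ) : ENNReal :=
  ∏ j ∈ Finset.range k, ENNReal.ofReal (w (T^[j] x))

/-- The set of points whose orbit avoids `B` at times `1, …, k`. -/
def P (T : X → X) (B : Set X) (k : ℕ) : Set X :=
  {x | ∀ j, 1 ≤ j → j ≤ k → T^[j] x ∉ B}

lemma measurableSet_P {T : X → X} {B : Set X} (hT : Measurable T) (hB : MeasurableSet B)
    (k : ℕ) : MeasurableSet (P T B k) := by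
  have : P T B k = ⋂ j ∈ Set.Icc 1 k, T^[j] ⁻¹' Bᶜ := by
    ext x
    simp [P, Set.mem_iInter, Set.mem_Icc]
  rw [this]
  exact MeasurableSet.biInter (Set.to_countable _) fun j _ => (hT.iterate j) hB.compl

lemma measurable_eC {T : X → X} {w : X → ℝ} (hT : Measurable T) (hw : Measurable w) (k : ℕ) :
    Measurable (fun x => eC T w x k) :=
  Finset.measurable_prod _ fun j _ => ENNReal.measurable_ofReal.comp (hw.comp (hT.iterate j))

lemma measurable_cocycle {T : X → X} {w : X → ℝ} (hT : Measurable T) (hw : Measurable w) (k : ℕ) :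
    Measurable (fun x => cocycle T w x k) :=
  Finset.measurable_prod _ fun j _ => hw.comp (hT.iterate j)

lemma eC_succ (T : X → X) (w : X → ℝ) (x : X) (k : ℕ) :
    eC T w x (k + 1) = eC T w (T x) k * ENNReal.ofReal (w x) := by
  simp [eC, Finset.prod_range_succ', Function.iterate_succ_apply]

lemma ofReal_cocycle {T : X → X} {w : X → ℝ} (hwpos : ∀ x, 0 < w x) (x : X) (k : ℕ) :
    ENNReal.ofReal (cocycle T w x k) = eC T w x k := by
  rw [cocycle, ENNReal.ofReal_prod_of_nonneg fun j _ => (hwpos _).le]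
  rfl

lemma step {T : X → X} {w : X → ℝ} {μ : Measure X} (hμ : IsTWInvariant T w μ)
    (hT : Measurable T) (hw : Measurable w) {g : X → ENNReal} (hg : Measurable g) :
    ∫⁻ x, g x ∂μ = ∫⁻ x, g (T x) * ENNReal.ofReal (w x) ∂μ := by
  have hW : Measurable fun x => ENNReal.ofReal (w x) := ENNReal.measurable_ofReal.comp hw
  have hμ' : μ = (μ.withDensity fun x => ENNReal.ofReal (w x)).map T := by
    refine Measure.ext fun s hs => ?_
    rw [Measure.map_apply hT hs, withDensity_apply _ (hT hs), hμ s hs]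
  conv_lhs => rw [hμ']
  rw [lintegral_map hg hT]
  exact (lintegral_withDensity_eq_lintegral_mul _ hW (hg.comp hT)).trans
    (lintegral_congr fun x => mul_comm _ _)

lemma preimage_P {T : X → X} {B : Set X} (k : ℕ) :
    T ⁻¹' (P T B k \ B) = P T B (k + 1) := by
  ext x
  simp only [Set.mem_preimage, Set.mem_diff, P, Set.mem_setOf_eq]
  constructor
  · rintro ⟨h1, h2⟩ j hj1 hj2
    rcases j with _ | j
    · omega
    · rcases Nat.eq_zero_or_pos j with rfl | hj
      · simpa using h2
      · rw [Function.iterate_succ_apply]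
        exact h1 j hj (by omega)
  · intro h
    refine ⟨fun j hj1 hj2 => ?_, by simpa using h 1 le_rfl (by omega)⟩
    rw [← Function.iterate_succ_apply]
    exact h (j + 1) (by omega) (by omega)

lemma rec_step {T : X → X} {w : X → ℝ} {B : Set X} {μ : Measure X}
    (hμ : IsTWInvariant T w μ) (hT : Measurable T) (hw : Measurable w)
    (hB : MeasurableSet B) {g : X → ENNReal} (hg : Measurable g) (k : ℕ) :
    ∫⁻ x in P T B k, g (T^[k] x) * eC T w x k ∂μ
      = ∫⁻ x in B ∩ P T B k, g (T^[k] x) * eC T w x k ∂μ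
        + ∫⁻ x in P T B (k + 1), g (T^[k + 1] x) * eC T w x (k + 1) ∂μ := by
  set F : X → ENNReal := fun x => g (T^[k] x) * eC T w x k with hF
  have hFmeas : Measurable F := (hg.comp (hT.iterate k)).mul (measurable_eC hT hw k)
  have hPk := measurableSet_P hT hB k
  have hsplit : ∫⁻ x in P T B k, F x ∂μ
      = ∫⁻ x in P T B k ∩ B, F x ∂μ + ∫⁻ x in P T B k \ B, F x ∂μ :=
    (lintegral_inter_add_diff F _ hB).symm
  have hG : ∫⁻ x in P T B k \ B, F x ∂μ
      = ∫⁻ x, (P T B k \ B).indicator F x ∂μ :=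
    (lintegral_indicator (hPk.diff hB) F).symm
  have hstep : ∫⁻ x, (P T B k \ B).indicator F x ∂μ
      = ∫⁻ x, (P T B k \ B).indicator F (T x) * ENNReal.ofReal (w x) ∂μ :=
    step hμ hT hw (hFmeas.indicator (hPk.diff hB))
  have hpt : ∀ x, (P T B k \ B).indicator F (T x) * ENNReal.ofReal (w x)
      = (P T B (k + 1)).indicator (fun x => g (T^[k + 1] x) * eC T w x (k + 1)) x := by
    intro x
    have hmem : T x ∈ P T B k \ B ↔ x ∈ P T B (k + 1) := by
      rw [← Set.mem_preimage, preimage_P]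
    by_cases hx : x ∈ P T B (k + 1)
    · rw [Set.indicator_of_mem (hmem.mpr hx), Set.indicator_of_mem hx, hF]
      simp only
      rw [eC_succ, Function.iterate_succ_apply, mul_assoc]
    · rw [Set.indicator_of_notMem (fun h => hx (hmem.mp h)), Set.indicator_of_notMem hx,
        zero_mul]
  calc ∫⁻ x in P T B k, F x ∂μ
      = ∫⁻ x in P T B k ∩ B, F x ∂μ + ∫⁻ x in P T B k \ B, F x ∂μ := hsplit
    _ = ∫⁻ x in B ∩ P T B k, F x ∂μ
        + ∫⁻ x in P T B (k + 1), g (T^[k + 1] x) * eC T w x (k + 1) ∂μ := by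
        rw [Set.inter_comm, hG, hstep, lintegral_congr hpt,
          lintegral_indicator (measurableSet_P hT hB (k + 1))]

lemma telescope {T : X → X} {w : X → ℝ} {B : Set X} {μ : Measure X}
    (hμ : IsTWInvariant T w μ) (hT : Measurable T) (hw : Measurable w)
    (hB : MeasurableSet B) {g : X → ENNReal} (hg : Measurable g) (N : ℕ) :
    ∫⁻ x, g x ∂μ
      = (∑ k ∈ Finset.range N, ∫⁻ x in B ∩ P T B k, g (T^[k] x) * eC T w x k ∂μ)
        + ∫⁻ x in P T B N, g (T^[N] x) * eC T w x N ∂μ := by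
  induction N with
  | zero =>
    have hP0 : P T B 0 = Set.univ := by
      ext x; simp only [P, Set.mem_setOf_eq, Set.mem_univ, iff_true]
      intro j h1 h2; omega
    simp [hP0, eC]
  | succ N ih =>
    rw [ih, rec_step hμ hT hw hB hg N, Finset.sum_range_succ, add_assoc]

end LGBAux

open LGBAux

theorem local_global_bridge {X : Type*} [MeasurableSpace X]
    (T : X → X) (w f : X → ℝ)
    (hT : Measurable T) (hw : Measurable w) (hwpos : ∀ x, 0 < w x)
    (hf : Measurable f)
    (B : Set X) (hB : MeasurableSet B)
    (hbdd : ∃ n : ℕ, ∀ x : X, ∃ m ≤ n, T^[m] x ∈ B)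
    (μ : Measure X) (hμ : IsTWInvariant T w μ) (hint : Integrable f μ) :
    ∫ x, f x ∂μ = ∫ x in B, wSum T w f (hitTime T B x) x ∂μ := by
  obtain ⟨n, hn⟩ := hbdd
  -- basic hitting-time facts
  have hS : ∀ x : X, ∃ j, (0 < j ∧ T^[j] x ∈ B) ∧ j ≤ n + 1 := by
    intro x
    obtain ⟨m, hm, hmem⟩ := hn (T x)
    exact ⟨m + 1, ⟨Nat.succ_pos m, by rwa [Function.iterate_succ_apply]⟩, by omega⟩
  have hit_le : ∀ x, hitTime T B x ≤ n + 1 := by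
    intro x
    obtain ⟨j, hj, hjle⟩ := hS x
    exact le_trans (Nat.sInf_le hj) hjle
  have mem_P_iff : ∀ x k, x ∈ P T B k ↔ k < hitTime T B x := by
    intro x k
    constructor
    · intro hx
      by_contra hk
      push_neg at hk
      have hne : {m : ℕ | 0 < m ∧ T^[m] x ∈ B}.Nonempty := ⟨(hS x).choose, (hS x).choose_spec.1⟩
      have hmem := Nat.sInf_mem hne
      exact hx (hitTime T B x) hmem.1 hk hmem.2
    · intro hk j hj1 hj2 hmem
      have : hitTime T B x ≤ j := Nat.sInf_le ⟨hj1, hmem⟩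
      omega
  have hPempty : P T B (n + 1) = (∅ : Set X) := by
    ext x
    simp only [Set.mem_empty_iff_false, iff_false]
    intro hx
    obtain ⟨j, hj, hjle⟩ := hS x
    exact (hx j hj.1 hjle) hj.2
  -- pointwise indicator-sum identity
  have sum_ind : ∀ {M : Type} [AddCommMonoid M] (x : X) (t : ℕ → X → M),
      ∑ k ∈ Finset.range (n + 1), (P T B k).indicator (t k) x
        = ∑ k ∈ Finset.range (hitTime T B x), t k x := by
    intro M _ x t
    rw [Finset.range_eq_Ico,
      ← Finset.sum_Ico_consecutive _ (Nat.zero_le (hitTime T B x)) (hit_le x)]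
    have h2 : ∑ k ∈ Finset.Ico (hitTime T B x) (n + 1), (P T B k).indicator (t k) x = 0 :=
      Finset.sum_eq_zero fun k hk => by
        refine Set.indicator_of_notMem ?_ _
        rw [mem_P_iff]
        push_neg
        exact (Finset.mem_Ico.mp hk).1
    rw [h2, add_zero, ← Finset.range_eq_Ico]
    exact Finset.sum_congr rfl fun k hk =>
      Set.indicator_of_mem ((mem_P_iff x k).mpr (Finset.mem_range.mp hk)) _
  -- master lintegral identity
  have master : ∀ (g : X → ENNReal), Measurable g →
      ∫⁻ x, g x ∂μ
        = ∫⁻ x in B, ∑ k ∈ Finset.range (hitTime T B x), g (T^[k] x) * eC T w x k ∂μ := by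
    intro g hg
    have htel := telescope hμ hT hw hB hg (n + 1)
    rw [hPempty] at htel
    simp only [Measure.restrict_empty, lintegral_zero_measure, add_zero] at htel
    rw [htel]
    have hterm : ∀ k, ∫⁻ x in B ∩ P T B k, g (T^[k] x) * eC T w x k ∂μ
        = ∫⁻ x in B, (P T B k).indicator (fun x => g (T^[k] x) * eC T w x k) x ∂μ := by
      intro k
      rw [lintegral_indicator (measurableSet_P hT hB k),
        Measure.restrict_restrict (measurableSet_P hT hB k), Set.inter_comm]
    rw [Finset.sum_congr rfl fun k _ => hterm k]
    have hswap := lintegral_finset_sum (μ := μ.restrict B) (Finset.range (n + 1))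
      (f := fun k => fun x => (P T B k).indicator (fun x => g (T^[k] x) * eC T w x k) x)
      (fun k _ => ((hg.comp (hT.iterate k)).mul (measurable_eC hT hw k)).indicator
        (measurableSet_P hT hB k))
    exact hswap.symm.trans (lintegral_congr fun x => sum_ind x _)
  -- real-valued positive/negative parts
  set Fp : X → ℝ := fun x =>
    ∑ k ∈ Finset.range (hitTime T B x), max (f (T^[k] x)) 0 * cocycle T w x k with hFp
  set Fm : X → ℝ := fun x =>
    ∑ k ∈ Finset.range (hitTime T B x), max (-f (T^[k] x)) 0 * cocycle T w x k with hFm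
  have coc_nonneg : ∀ x k, 0 ≤ cocycle T w x k := fun x k =>
    Finset.prod_nonneg fun j _ => (hwpos _).le
  have hFp_eq : ∀ x, Fp x = ∑ k ∈ Finset.range (n + 1),
      (P T B k).indicator (fun x => max (f (T^[k] x)) 0 * cocycle T w x k) x := by
    intro x
    rw [hFp]
    exact (sum_ind x (fun k y => max (f (T^[k] y)) 0 * cocycle T w y k)).symm
  have hFm_eq : ∀ x, Fm x = ∑ k ∈ Finset.range (n + 1),
      (P T B k).indicator (fun x => max (-f (T^[k] x)) 0 * cocycle T w x k) x := by
    intro x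
    rw [hFm]
    exact (sum_ind x (fun k y => max (-f (T^[k] y)) 0 * cocycle T w y k)).symm
  have hFp_meas : Measurable Fp := by
    rw [funext hFp_eq]
    exact Finset.measurable_sum _ fun k _ =>
      (((hf.comp (hT.iterate k)).max measurable_const).mul
        (measurable_cocycle hT hw k)).indicator (measurableSet_P hT hB k)
  have hFm_meas : Measurable Fm := by
    rw [funext hFm_eq]
    exact Finset.measurable_sum _ fun k _ =>
      ((((hf.comp (hT.iterate k)).neg).max measurable_const).mul
        (measurable_cocycle hT hw k)).indicator (measurableSet_P hT hB k)
  have hFp_nonneg : ∀ x, 0 ≤ Fp x := fun x =>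
    Finset.sum_nonneg fun k _ => mul_nonneg (le_max_right _ _) (coc_nonneg x k)
  have hFm_nonneg : ∀ x, 0 ≤ Fm x := fun x =>
    Finset.sum_nonneg fun k _ => mul_nonneg (le_max_right _ _) (coc_nonneg x k)
  have ofReal_max : ∀ a : ℝ, ENNReal.ofReal (max a 0) = ENNReal.ofReal a := by
    intro a
    rcases le_total a 0 with h | h
    · rw [max_eq_right h, ENNReal.ofReal_of_nonpos h, ENNReal.ofReal_zero]
    · rw [max_eq_left h]
  have hofFp : ∀ x, ENNReal.ofReal (Fp x)
      = ∑ k ∈ Finset.range (hitTime T B x), ENNReal.ofReal (f (T^[k] x)) * eC T w x k := by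
    intro x
    rw [hFp, ENNReal.ofReal_sum_of_nonneg fun k _ =>
      mul_nonneg (le_max_right _ _) (coc_nonneg x k)]
    exact Finset.sum_congr rfl fun k _ => by
      rw [ENNReal.ofReal_mul (le_max_right _ _), ofReal_max, ofReal_cocycle hwpos]
  have hofFm : ∀ x, ENNReal.ofReal (Fm x)
      = ∑ k ∈ Finset.range (hitTime T B x), ENNReal.ofReal (-f (T^[k] x)) * eC T w x k := by
    intro x
    rw [hFm, ENNReal.ofReal_sum_of_nonneg fun k _ =>
      mul_nonneg (le_max_right _ _) (coc_nonneg x k)]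
    exact Finset.sum_congr rfl fun k _ => by
      rw [ENNReal.ofReal_mul (le_max_right _ _), ofReal_max, ofReal_cocycle hwpos]
  have lint_Fp : ∫⁻ x in B, ENNReal.ofReal (Fp x) ∂μ = ∫⁻ x, ENNReal.ofReal (f x) ∂μ := by
    rw [master (fun x => ENNReal.ofReal (f x)) (ENNReal.measurable_ofReal.comp hf)]
    exact lintegral_congr fun x => hofFp x
  have lint_Fm : ∫⁻ x in B, ENNReal.ofReal (Fm x) ∂μ = ∫⁻ x, ENNReal.ofReal (-f x) ∂μ := by
    rw [master (fun x => ENNReal.ofReal (-f x)) (ENNReal.measurable_ofReal.comp hf.neg)]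
    exact lintegral_congr fun x => hofFm x
  have hub : ∫⁻ x, ENNReal.ofReal (f x) ∂μ < ⊤ := by
    refine lt_of_le_of_lt (lintegral_mono fun x => Real.ofReal_le_enorm (f x)) ?_
    exact hint.2
  have hub' : ∫⁻ x, ENNReal.ofReal (-f x) ∂μ < ⊤ := by
    refine lt_of_le_of_lt (lintegral_mono fun x => ?_) hint.2
    calc ENNReal.ofReal (-f x) ≤ ‖-f x‖ₑ := Real.ofReal_le_enorm _
      _ = ‖f x‖ₑ := by rw [enorm_neg]
  have int_Fp : Integrable Fp (μ.restrict B) := by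
    refine ⟨hFp_meas.aestronglyMeasurable, ?_⟩
    rw [hasFiniteIntegral_iff_ofReal (ae_of_all _ hFp_nonneg), lint_Fp]
    exact hub
  have int_Fm : Integrable Fm (μ.restrict B) := by
    refine ⟨hFm_meas.aestronglyMeasurable, ?_⟩
    rw [hasFiniteIntegral_iff_ofReal (ae_of_all _ hFm_nonneg), lint_Fm]
    exact hub'
  have hwsum : ∀ x, wSum T w f (hitTime T B x) x = Fp x - Fm x := by
    intro x
    rw [hFp, hFm, ← Finset.sum_sub_distrib]
    exact Finset.sum_congr rfl fun k _ => by
      rw [← sub_mul, max_zero_sub_max_neg_zero_eq_self]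
  have intP : ∫ x in B, Fp x ∂μ = (∫⁻ x in B, ENNReal.ofReal (Fp x) ∂μ).toReal :=
    integral_eq_lintegral_of_nonneg_ae (ae_of_all _ hFp_nonneg) hFp_meas.aestronglyMeasurable
  have intM : ∫ x in B, Fm x ∂μ = (∫⁻ x in B, ENNReal.ofReal (Fm x) ∂μ).toReal :=
    integral_eq_lintegral_of_nonneg_ae (ae_of_all _ hFm_nonneg) hFm_meas.aestronglyMeasurable
  calc ∫ x, f x ∂μ
      = (∫⁻ x, ENNReal.ofReal (f x) ∂μ).toReal - (∫⁻ x, ENNReal.ofReal (-f x) ∂μ).toReal :=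
        integral_eq_lintegral_pos_part_sub_lintegral_neg_part hint
    _ = ∫ x in B, Fp x ∂μ - ∫ x in B, Fm x ∂μ := by rw [intP, intM, lint_Fp, lint_Fm]
    _ = ∫ x in B, (Fp x - Fm x) ∂μ := (integral_sub int_Fp int_Fm).symm
    _ = ∫ x in B, wSum T w f (hitTime T B x) x ∂μ := by
        exact integral_congr_ae (ae_of_all _ fun x => (hwsum x).symm)
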